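/- arXiv:2510.19229 — 2 statements merged into one kernel-verified Lean document; each statement's English description precedes it below -/
import Mathlib

section
/- Merge criterion: let ω be a partition with two distinct cluster labels a and b, and let ω' be the partition obtained by relabeling all items in cluster b to label a. Let A = Σ over pairs i<j with {ω(i),ω(j)} = {a,b} of w⁺(i,j) (cross attraction) and R = Σ over the same pairs of w⁻(i,j) (cross repulsion). Then H_γ(ω') - H_γ(ω) = -A + γ·R; in particular, if R > 0 the merge strictly lowers the energy if and only if γ < A / R. -/
def hA {n : ℕ} (wp : Fin n → Fin n → ℝ) (ω : Fin n → ℕ) : ℝ :=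
  -∑ i : Fin n, ∑ j : Fin n, if i < j ∧ ω i = ω j then wp i j else 0

def hR {n : ℕ} (wm : Fin n → Fin n → ℝ) (ω : Fin n → ℕ) : ℝ :=
  ∑ i : Fin n, ∑ j : Fin n, if i < j ∧ ω i = ω j then wm i j else 0

def Ham {n : ℕ} (wp wm : Fin n → Fin n → ℝ) (γ : ℝ) (ω : Fin n → ℕ) : ℝ :=
  hA wp ω + γ * hR wm ω

theorem merge_criterion {n : ℕ} (wp wm : Fin n → Fin n → ℝ)
    (hwp : ∀ i j, 0 ≤ wp i j) (hwm : ∀ i j, 0 ≤ wm i j)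
    (hwps : ∀ i j, wp i j = wp j i) (hwms : ∀ i j, wm i j = wm j i)
    (γ : ℝ) (ω : Fin n → ℕ) (a b : ℕ) (hab : a ≠ b)
    (ω' : Fin n → ℕ) (hω' : ∀ i, ω' i = if ω i = b then a else ω i)
    (A R : ℝ)
    (hA' : A = ∑ i : Fin n, ∑ j : Fin n,
      if i < j ∧ ((ω i = a ∧ ω j = b) ∨ (ω i = b ∧ ω j = a)) then wp i j else 0)
    (hR' : R = ∑ i : Fin n, ∑ j : Fin n,
      if i < j ∧ ((ω i = a ∧ ω j = b) ∨ (ω i = b ∧ ω j = a)) then wm i j else 0) :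
    Ham wp wm γ ω' - Ham wp wm γ ω = -A + γ * R ∧
      (0 < R → (Ham wp wm γ ω' < Ham wp wm γ ω ↔ γ < A / R)) := by
  have key : ∀ f : Fin n → Fin n → ℝ,
      (∑ i : Fin n, ∑ j : Fin n, if i < j ∧ ω' i = ω' j then f i j else 0)
      = (∑ i : Fin n, ∑ j : Fin n, if i < j ∧ ω i = ω j then f i j else 0)
      + ∑ i : Fin n, ∑ j : Fin n,
          if i < j ∧ ((ω i = a ∧ ω j = b) ∨ (ω i = b ∧ ω j = a)) then f i j else 0 := by
    intro f
    rw [← Finset.sum_add_distrib]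
    apply Finset.sum_congr rfl
    intro i _
    rw [← Finset.sum_add_distrib]
    apply Finset.sum_congr rfl
    intro j _
    by_cases hij : i < j
    · simp only [hω', hij, true_and]
      split_ifs <;> first | ring1 | (exfalso; omega) | (exfalso; cases ‹_ ∨ _› <;> omega)
    · simp [hij]
  have h1 : Ham wp wm γ ω' - Ham wp wm γ ω = -A + γ * R := by
    simp only [Ham, hA, hR, key wp, key wm, hA', hR']
    ring
  refine ⟨h1, fun hRpos => ?_⟩
  rw [← sub_neg, h1, lt_div_iff₀ hRpos]
  constructor <;> intro <;> linarith
end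

section
/- If the coarsest partition ω_0 is optimal at some γ₀ ≥ 0, then ω_0 is optimal at every γ with 0 ≤ γ ≤ γ₀. -/
lemma hR_le {n : ℕ} (wm : Fin n → Fin n → ℝ) (hwm : ∀ i j, 0 ≤ wm i j)
    (ω0 : Fin n → ℕ) (hconst : ∀ i j, ω0 i = ω0 j) (ω : Fin n → ℕ) :
    hR wm ω ≤ hR wm ω0 := by
  unfold hR
  apply Finset.sum_le_sum
  intro i _
  apply Finset.sum_le_sum
  intro j _
  split_ifs with h1 h2 h2
  · exact le_refl _
  · exact absurd ⟨h1.1, hconst i j⟩ h2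
  · exact hwm i j
  · exact le_refl _

theorem coarsest_optimal_downward {n : ℕ} (wp wm : Fin n → Fin n → ℝ)
    (hwp : ∀ i j, 0 ≤ wp i j) (hwm : ∀ i j, 0 ≤ wm i j)
    (hwps : ∀ i j, wp i j = wp j i) (hwms : ∀ i j, wm i j = wm j i)
    (ω0 : Fin n → ℕ) (hconst : ∀ i j, ω0 i = ω0 j)
    (γ₀ : ℝ) (hγ₀ : 0 ≤ γ₀)
    (hopt : ∀ ω : Fin n → ℕ, Ham wp wm γ₀ ω0 ≤ Ham wp wm γ₀ ω) :
    ∀ γ : ℝ, 0 ≤ γ → γ ≤ γ₀ → ∀ ω : Fin n → ℕ, Ham wp wm γ ω0 ≤ Ham wp wm γ ω := by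
  intro γ hγ hγγ ω
  have h1 := hopt ω
  have h2 := hR_le wm hwm ω0 hconst ω
  unfold Ham at *
  nlinarith [mul_nonneg (sub_nonneg.2 hγγ) (sub_nonneg.2 h2)]
end
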